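/- Let c₁ < c₂, Δ = c₂ - c₁, and φ(x) = η(x-c₁)/(η(x-c₁)+η(c₂-x)) with η(x) = exp(-1/x)·1{x>0}. Then for every x ∈ (c₁, c₂), |φ'(x)| ≤ exp(2/Δ). -/

import Mathlib

-- t² ≤ e^t for t ≥ 0
lemma sq_le_exp' {t : ℝ} (ht : 0 ≤ t) : t ^ 2 ≤ Real.exp t := by
  have h := Real.sum_le_exp_of_nonneg ht 4
  simp [Finset.sum_range_succ, Nat.factorial] at h
  nlinarith [pow_nonneg ht 3, sq_nonneg (t - 1)]

theorem stmt_5 (c₁ c₂ : ℝ) (hc : c₁ < c₂)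
    (η : ℝ → ℝ) (hη : ∀ x : ℝ, η x = if 0 < x then Real.exp (-1 / x) else 0)
    (φ : ℝ → ℝ) (hφ : ∀ x : ℝ, φ x = η (x - c₁) / (η (x - c₁) + η (c₂ - x))) :
    ∀ x ∈ Set.Ioo c₁ c₂, |deriv φ x| ≤ Real.exp (2 / (c₂ - c₁)) := by
  intro x hx
  obtain ⟨hx1, hx2⟩ := hx
  set a : ℝ := x - c₁ with ha
  set b : ℝ := c₂ - x with hb
  have hap : 0 < a := by simp only [ha]; linarith
  have hbp : 0 < b := by simp only [hb]; linarith
  set A : ℝ := Real.exp (-1 / a) with hA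
  set B : ℝ := Real.exp (-1 / b) with hB
  have hApos : 0 < A := Real.exp_pos _
  have hBpos : 0 < B := Real.exp_pos _
  have hABpos : 0 < A + B := by linarith
  -- φ agrees with smooth function near x
  have hev : φ =ᶠ[nhds x]
      fun y => Real.exp (-1 / (y - c₁)) / (Real.exp (-1 / (y - c₁)) + Real.exp (-1 / (c₂ - y))) := by
    filter_upwards [isOpen_Ioo.mem_nhds (⟨hx1, hx2⟩ : x ∈ Set.Ioo c₁ c₂)] with y hy
    rw [hφ, hη, hη, if_pos (by linarith [hy.1] : (0:ℝ) < y - c₁),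
      if_pos (by linarith [hy.2] : (0:ℝ) < c₂ - y)]
  rw [hev.deriv_eq]
  -- derivatives
  have h1 : HasDerivAt (fun y : ℝ => -1 / (y - c₁)) (1 / a ^ 2) x := by
    have := (((hasDerivAt_id x).sub_const c₁).inv (by positivity : x - c₁ ≠ 0)).neg
    have e1 : (fun y : ℝ => -1 / (y - c₁)) = -(fun x => id x - c₁)⁻¹ := by
      funext y; simp [neg_div]
    have e2 : (1 / a ^ 2) = -(-1 / (id x - c₁) ^ 2) := by simp [ha, neg_div]
    rw [e1, e2]; exact this
  have h2 : HasDerivAt (fun y : ℝ => -1 / (c₂ - y)) (-(1 / b ^ 2)) x := by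
    have := (((hasDerivAt_id x).const_sub c₂).inv (by positivity : c₂ - x ≠ 0)).neg
    have e1 : (fun y : ℝ => -1 / (c₂ - y)) = -(fun x => c₂ - id x)⁻¹ := by
      funext y; simp [neg_div]
    have e2 : -(1 / b ^ 2) = -(- -1 / (c₂ - id x) ^ 2) := by simp [hb, neg_div]
    rw [e1, e2]; exact this
  have hAd : HasDerivAt (fun y : ℝ => Real.exp (-1 / (y - c₁))) (A * (1 / a ^ 2)) x := h1.exp
  have hBd : HasDerivAt (fun y : ℝ => Real.exp (-1 / (c₂ - y))) (B * (-(1 / b ^ 2))) x := h2.exp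
  have hD : HasDerivAt
      (fun y => Real.exp (-1 / (y - c₁)) / (Real.exp (-1 / (y - c₁)) + Real.exp (-1 / (c₂ - y))))
      ((A * (1 / a ^ 2) * (A + B) - A * (A * (1 / a ^ 2) + B * (-(1 / b ^ 2)))) / (A + B) ^ 2) x :=
    hAd.div (hAd.add hBd) (ne_of_gt hABpos)
  rw [hD.deriv]
  have hDval : (A * (1 / a ^ 2) * (A + B) - A * (A * (1 / a ^ 2) + B * (-(1 / b ^ 2)))) / (A + B) ^ 2
      = (A * (1 / a ^ 2) * B + B * (1 / b ^ 2) * A) / (A + B) ^ 2 := by ring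
  rw [hDval]
  have hDpos : 0 ≤ (A * (1 / a ^ 2) * B + B * (1 / b ^ 2) * A) / (A + B) ^ 2 := by positivity
  rw [abs_of_nonneg hDpos]
  -- key bounds
  have key : ∀ t : ℝ, 0 < t → Real.exp (-1 / t) * (1 / t ^ 2) ≤ 1 := by
    intro t ht
    have h : 1 / t ^ 2 ≤ Real.exp (1 / t) := by
      have h := sq_le_exp' (by positivity : (0:ℝ) ≤ 1 / t)
      calc 1 / t ^ 2 = (1 / t) ^ 2 := by rw [div_pow, one_pow]
        _ ≤ _ := h
    calc Real.exp (-1 / t) * (1 / t ^ 2) ≤ Real.exp (-1 / t) * Real.exp (1 / t) :=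
          mul_le_mul_of_nonneg_left h (Real.exp_pos _).le
      _ = 1 := by rw [← Real.exp_add, neg_div, neg_add_cancel, Real.exp_zero]
  have hA1 : A * (1 / a ^ 2) ≤ 1 := key a hap
  have hB1 : B * (1 / b ^ 2) ≤ 1 := key b hbp
  have hnum : A * (1 / a ^ 2) * B + B * (1 / b ^ 2) * A ≤ A + B := by
    nlinarith [hA1, hB1, hApos.le, hBpos.le]
  have hAB : Real.exp (-(2 / (c₂ - c₁))) ≤ A + B := by
    have hΔ : a + b = c₂ - c₁ := by simp [ha, hb]
    rcases le_total ((c₂ - c₁) / 2) a with h | h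
    · have : Real.exp (-(2 / (c₂ - c₁))) ≤ A := by
        apply Real.exp_le_exp.2
        rw [neg_div]
        rw [neg_le_neg_iff]
        rw [div_le_div_iff₀ hap (by linarith)]
        linarith
      linarith
    · have hb2 : (c₂ - c₁) / 2 ≤ b := by linarith
      have : Real.exp (-(2 / (c₂ - c₁))) ≤ B := by
        apply Real.exp_le_exp.2
        rw [neg_div, neg_le_neg_iff, div_le_div_iff₀ hbp (by linarith)]
        linarith
      linarith
  calc (A * (1 / a ^ 2) * B + B * (1 / b ^ 2) * A) / (A + B) ^ 2
      ≤ (A + B) / (A + B) ^ 2 := by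
        apply div_le_div_of_nonneg_right hnum (by positivity) |>.trans_eq rfl
    _ = (A + B)⁻¹ := by field_simp
    _ ≤ (Real.exp (-(2 / (c₂ - c₁))))⁻¹ := by
        apply inv_anti₀ (Real.exp_pos _) hAB
    _ = Real.exp (2 / (c₂ - c₁)) := by rw [← Real.exp_neg, neg_neg]
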